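/- Assume Dickson's conjecture. Then for every k, N ∈ ℕ and every set A ⊆ [1, N] ∩ P_k there exists n ∈ ℕ such that [n+1, n+N] ∩ P_{k+1} = {n + a : a ∈ A}, i.e. for every m ∈ {1,…,N} one has Ω(n+m) = k+1 if and only if m ∈ A. -/

import Mathlib

/-- `Omega n` is the number of prime factors of `n` counted with multiplicity. -/
def Omega (n : ℕ) : ℕ := n.primeFactorsList.length

/-- Dickson's conjecture: if the family of linear polynomials `aᵢ + bᵢ·x` (with `bᵢ ≥ 1`)
satisfies Dickson's condition (for every prime `p` there is `y` with
`p ∤ ∏ᵢ (aᵢ + bᵢ·y)`), then there are infinitely many `m ∈ ℕ` such that all the values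
`aᵢ + bᵢ·m` are prime. -/
def DicksonConjecture : Prop :=
  ∀ (k : ℕ) (a b : Fin k → ℤ), (∀ i, 1 ≤ b i) →
    (∀ p : ℕ, p.Prime → ∃ y : ℤ, ¬ ((p : ℤ) ∣ ∏ i, (a i + b i * y))) →
    ∀ N : ℕ, ∃ m : ℕ, N ≤ m ∧ ∀ i, Prime (a i + b i * (m : ℤ))

lemma Omega_eq (n : ℕ) : Omega n = ArithmeticFunction.cardFactors n :=
  ArithmeticFunction.cardFactors_apply.symm

lemma Omega_mul {a b : ℕ} (ha : a ≠ 0) (hb : b ≠ 0) : Omega (a * b) = Omega a + Omega b := by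
  rw [Omega_eq, Omega_eq, Omega_eq]; exact ArithmeticFunction.cardFactors_mul ha hb

lemma Omega_prime {p : ℕ} (hp : p.Prime) : Omega p = 1 := by
  rw [Omega_eq]; exact ArithmeticFunction.cardFactors_apply_prime hp

lemma Omega_pow {p j : ℕ} (hp : p.Prime) : Omega (p ^ j) = j := by
  rw [Omega_eq]; exact ArithmeticFunction.cardFactors_apply_prime_pow hp

lemma le_Omega_of_dvd {d n : ℕ} (hd : d ∣ n) (hn : n ≠ 0) : Omega d ≤ Omega n := by
  obtain ⟨e, rfl⟩ := hd
  have hd0 : d ≠ 0 := by rintro rfl; simp at hn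
  have he0 : e ≠ 0 := by rintro rfl; simp at hn
  rw [Omega_mul hd0 he0]; omega


/-- Assuming Dickson's conjecture: for all `k, N ≥ 1` and every set
`A ⊆ [1, N] ∩ P_k`, there is `n` such that `[n+1, n+N] ∩ P_{k+1} = {n + a : a ∈ A}`. -/
theorem pattern_transfer_Pk_to_Pk_succ (hDickson : DicksonConjecture)
    (k N : ℕ) (hk : 1 ≤ k) (hN : 1 ≤ N)
    (A : Set ℕ) (hA : A ⊆ {m : ℕ | 1 ≤ m ∧ m ≤ N ∧ Omega m = k}) :
    ∃ n : ℕ, 1 ≤ n ∧ ∀ m : ℕ, 1 ≤ m → m ≤ N → (Omega (n + m) = k + 1 ↔ m ∈ A) := by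
  classical
  set K := k + 2 with hKdef
  -- distinct primes greater than N
  set q : ℕ → ℕ := fun m => Nat.nth Nat.Prime (N + m) with hqdef
  have hqprime : ∀ m, (q m).Prime := fun m =>
    Nat.nth_mem_of_infinite Nat.infinite_setOf_prime _
  have hqmono : StrictMono (Nat.nth Nat.Prime) :=
    Nat.nth_strictMono Nat.infinite_setOf_prime
  have hqge : ∀ m, N + m ≤ q m := fun m => hqmono.le_apply
  have hqinj : ∀ {m m' : ℕ}, q m = q m' → m = m' := by
    intro m m' h
    have := hqmono.injective h
    omega
  set A' : Finset ℕ := (Finset.Icc 1 N).filter (· ∈ A) with hA'def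
  set B : Finset ℕ := (Finset.Icc 1 N).filter (· ∉ A) with hBdef
  have hmemB : ∀ {m}, m ∈ B → 1 ≤ m ∧ m ≤ N ∧ m ∉ A := by
    intro m hm
    simp only [hBdef, Finset.mem_filter, Finset.mem_Icc] at hm
    tauto
  have hmemA' : ∀ {m}, m ∈ A' → 1 ≤ m ∧ m ≤ N ∧ m ∈ A := by
    intro m hm
    simp only [hA'def, Finset.mem_filter, Finset.mem_Icc] at hm
    tauto
  have hqgtN : ∀ m ∈ B, N < q m := fun m hm => by
    have h1 := (hmemB hm).1; have := hqge m; omega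
  set F := (N.factorial) ^ 2 with hFdef
  have hFpos : 0 < F := pow_pos N.factorial_pos 2
  set Q := ∏ m ∈ B, (q m) ^ K with hQdef
  set L := F * Q with hLdef
  have hLpos : 0 < L :=
    Nat.mul_pos hFpos (Finset.prod_pos fun m _ => pow_pos (hqprime m).pos K)
  set R : ℕ → ℕ := fun m => F * ∏ m' ∈ B.erase m, (q m') ^ K with hRdef
  have hLR : ∀ m ∈ B, L = (q m) ^ K * R m := by
    intro m hm
    rw [hLdef, hRdef, hQdef, ← Finset.prod_erase_mul B _ hm]
    ring
  set e : ℕ → ℕ := fun m => (R m) ^ ((q m) ^ K).totient with hedef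
  set c := ∑ m ∈ B, ((q m) ^ K - m) * e m with hcdef
  have htotpos : ∀ m, 0 < ((q m) ^ K).totient := fun m =>
    Nat.totient_pos.2 (pow_pos (hqprime m).pos K)
  have hRdvde : ∀ m, R m ∣ e m := fun m => dvd_pow_self (R m) (htotpos m).ne'
  have hFdvdR : ∀ m, F ∣ R m := fun m => dvd_mul_right _ _
  have hFdvde : ∀ m, F ∣ e m := fun m => (hFdvdR m).trans (hRdvde m)
  have hFdvdc : F ∣ c := Finset.dvd_sum fun m _ => ((hFdvde m).mul_left _)
  have hFdvdL : F ∣ L := dvd_mul_right _ _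
  have hqKdvdL : ∀ m ∈ B, (q m) ^ K ∣ L := fun m hm => Dvd.intro _ (hLR m hm).symm
  have hqKdvde' : ∀ m ∈ B, ∀ m' ∈ B, m ≠ m' → (q m) ^ K ∣ e m' := by
    intro m hm m' hm' hne
    have h1 : (q m) ^ K ∣ ∏ m'' ∈ B.erase m', (q m'') ^ K :=
      Finset.dvd_prod_of_mem _ (Finset.mem_erase.2 ⟨hne, hm⟩)
    exact (h1.mul_left F).trans (hRdvde m')
  have hcop : ∀ m ∈ B, Nat.Coprime (R m) ((q m) ^ K) := by
    intro m hm
    refine Nat.Coprime.pow_right K ?_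
    refine (((hqprime m).coprime_iff_not_dvd).2 ?_).symm
    intro hdvd
    rcases ((hqprime m).dvd_mul).1 hdvd with h | h
    · have h2 : q m ∣ N.factorial := (hqprime m).dvd_of_dvd_pow h
      have h3 : q m ≤ N := ((hqprime m).dvd_factorial).1 h2
      exact absurd h3 (not_le.2 (hqgtN m hm))
    · obtain ⟨m'', hm'', h4⟩ := ((hqprime m).prime.dvd_finset_prod_iff _).1 h
      have h5 : q m ∣ q m'' := (hqprime m).dvd_of_dvd_pow h4
      have h6 : q m = q m'' := (Nat.prime_dvd_prime_iff_eq (hqprime m) (hqprime m'')).1 h5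
      exact absurd (hqinj h6) (Finset.mem_erase.1 hm'').1.symm
  have heuler : ∀ m ∈ B, e m ≡ 1 [MOD (q m) ^ K] := fun m hm =>
    Nat.ModEq.pow_totient (hcop m hm)
  have hcm : ∀ m ∈ B, (q m) ^ K ∣ (c + m) := by
    intro m hm
    have hrest : (q m) ^ K ∣ ∑ m' ∈ B.erase m, ((q m') ^ K - m') * e m' :=
      Finset.dvd_sum fun m' hm' =>
        (hqKdvde' m hm m' (Finset.mem_of_mem_erase hm')
          (Finset.mem_erase.1 hm').1.symm).mul_left _
    have hsplit : c = (∑ m' ∈ B.erase m, ((q m') ^ K - m') * e m') + ((q m) ^ K - m) * e m :=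
      (Finset.sum_erase_add B _ hm).symm
    have hmle : m ≤ (q m) ^ K := by
      have h1 := hqgtN m hm
      have h2 : q m ≤ (q m) ^ K := Nat.le_self_pow (by omega) _
      have h3 := (hmemB hm).2.1
      omega
    have hterm : (q m) ^ K ∣ ((q m) ^ K - m) * e m + m := by
      have h1 : ((q m) ^ K - m) * e m + m ≡ ((q m) ^ K - m) * 1 + m [MOD (q m) ^ K] :=
        ((heuler m hm).mul_left _).add_right m
      have h2 : ((q m) ^ K - m) * 1 + m = (q m) ^ K := by omega
      rw [h2] at h1
      exact Nat.modEq_zero_iff_dvd.1 (h1.trans (Nat.modEq_zero_iff_dvd.2 dvd_rfl))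
    rw [hsplit, add_assoc]
    exact dvd_add hrest hterm
  -- enumerate A'
  set k' := A'.card with hk'def
  set elt : Fin k' → ℕ := fun i => ((A'.equivFin.symm i : {x // x ∈ A'}) : ℕ) with heltdef
  have helt : ∀ i, elt i ∈ A' := fun i => (A'.equivFin.symm i).2
  have heltpos : ∀ i, 1 ≤ elt i := fun i => (hmemA' (helt i)).1
  have heltN : ∀ i, elt i ≤ N := fun i => (hmemA' (helt i)).2.1
  have heltA : ∀ i, elt i ∈ A := fun i => (hmemA' (helt i)).2.2
  have heltdvdF : ∀ i, elt i ∣ F :=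
    fun i => (Nat.dvd_factorial (heltpos i) (heltN i)).trans (dvd_pow_self _ two_ne_zero)
  have heltdvdc : ∀ i, elt i ∣ c := fun i => (heltdvdF i).trans hFdvdc
  have heltdvdL : ∀ i, elt i ∣ L := fun i => (heltdvdF i).trans hFdvdL
  set a : Fin k' → ℤ := fun i => (((c + elt i) / elt i : ℕ) : ℤ) with hadef
  set b : Fin k' → ℤ := fun i => ((L / elt i : ℕ) : ℤ) with hbdef
  have hb1 : ∀ i, 1 ≤ b i := by
    intro i
    have h : 0 < L / elt i := Nat.div_pos (Nat.le_of_dvd hLpos (heltdvdL i)) (heltpos i)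
    simp only [hbdef]
    exact_mod_cast h
  have hcond : ∀ p : ℕ, p.Prime → ∃ y : ℤ, ¬ ((p : ℤ) ∣ ∏ i, (a i + b i * y)) := by
    intro p hp
    by_cases hpL : p ∣ L
    · refine ⟨0, fun hdvd => ?_⟩
      simp only [mul_zero, add_zero] at hdvd
      obtain ⟨i, -, hi⟩ := ((Nat.prime_iff_prime_int.1 hp).dvd_finset_prod_iff _).1 hdvd
      have hnat : p ∣ (c + elt i) / elt i := by
        simp only [hadef] at hi
        exact_mod_cast hi
      have hmc : elt i ∣ c + elt i := dvd_add (heltdvdc i) dvd_rfl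
      rcases (hp.dvd_mul).1 hpL with h | h
      · -- p ∣ F, so p ≤ N
        have hpfac : p ∣ N.factorial := hp.dvd_of_dvd_pow h
        have hmp : elt i * p ∣ F := by
          rw [hFdef, sq]
          exact mul_dvd_mul (Nat.dvd_factorial (heltpos i) (heltN i)) hpfac
        obtain ⟨d, hd⟩ := hmp.trans hFdvdc
        have hquot : (c + elt i) / elt i = p * d + 1 := by
          rw [hd, mul_assoc, Nat.add_div_right _ (heltpos i),
            Nat.mul_div_cancel_left _ (heltpos i)]
        rw [hquot] at hnat
        have h1 : p ∣ 1 := (Nat.dvd_add_right (Dvd.intro d rfl)).1 hnat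
        have h2 := hp.two_le
        have h3 := Nat.le_of_dvd Nat.one_pos h1
        omega
      · -- p = q m' for some m' ∈ B
        obtain ⟨m', hm', h4⟩ := (hp.prime.dvd_finset_prod_iff _).1 h
        have hpq : p = q m' :=
          (Nat.prime_dvd_prime_iff_eq hp (hqprime m')).1 (hp.dvd_of_dvd_pow h4)
        have h5 : p ∣ c + elt i := hnat.trans (Nat.div_dvd_of_dvd hmc)
        have h6 : q m' ∣ c + m' :=
          (dvd_pow_self (q m') (by omega : K ≠ 0)).trans (hcm m' hm')
        have h7 : (q m' : ℤ) ∣ ((elt i : ℤ) - (m' : ℤ)) := by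
          have ha' : (q m' : ℤ) ∣ ((c + elt i : ℕ) : ℤ) := by
            exact_mod_cast Int.natCast_dvd_natCast.2 (hpq ▸ h5)
          have hb' : (q m' : ℤ) ∣ ((c + m' : ℕ) : ℤ) := Int.natCast_dvd_natCast.2 h6
          have := dvd_sub ha' hb'
          push_cast at this ⊢
          convert this using 1
          exacts [rfl, by ring]
        have h8 : (elt i : ℤ) - (m' : ℤ) = 0 := by
          refine Int.eq_zero_of_abs_lt_dvd h7 ?_
          have hx1 : 1 ≤ elt i := heltpos i
          have hx2 : elt i ≤ N := heltN i
          have hx3 := (hmemB hm').1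
          have hx4 := (hmemB hm').2.1
          have hx5 := hqgtN m' hm'
          rw [abs_lt]
          constructor <;> omega
        have h9 : elt i = m' := by exact_mod_cast sub_eq_zero.1 h8
        exact (hmemB hm').2.2 (h9 ▸ heltA i)
    · -- p does not divide L, hence p > N
      have hpN : N < p := by
        by_contra hcon
        push_neg at hcon
        exact hpL ((Nat.dvd_factorial hp.pos hcon).trans
          ((dvd_pow_self _ two_ne_zero).trans hFdvdL))
      haveI : Fact p.Prime := ⟨hp⟩
      set S : Finset (ZMod p) :=
        Finset.univ.image (fun i => (-(a i : ZMod p)) * ((b i : ZMod p))⁻¹) with hSdef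
      have hk'N : k' ≤ N := by
        have h1 : A'.card ≤ (Finset.Icc 1 N).card := by
          rw [hA'def]; exact Finset.card_filter_le _ _
        have h2 : (Finset.Icc 1 N).card = N := by rw [Nat.card_Icc]; omega
        omega
      have hScard : S.card < Fintype.card (ZMod p) := by
        have h1 : S.card ≤ k' := Finset.card_image_le.trans (by simp)
        rw [ZMod.card]
        omega
      have hSc : (Sᶜ).Nonempty := by
        apply Finset.card_pos.1
        rw [Finset.card_compl]
        omega
      obtain ⟨z, hz⟩ := hSc
      refine ⟨(z.val : ℤ), fun hdvd => ?_⟩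
      obtain ⟨i, -, hi⟩ := ((Nat.prime_iff_prime_int.1 hp).dvd_finset_prod_iff _).1 hdvd
      have h0 : ((a i + b i * ((z.val : ℕ) : ℤ) : ℤ) : ZMod p) = 0 :=
        (ZMod.intCast_zmod_eq_zero_iff_dvd _ p).2 hi
      have hbne : ((b i : ℤ) : ZMod p) ≠ 0 := by
        intro hcon
        simp only [hbdef, Int.cast_natCast, ZMod.natCast_eq_zero_iff] at hcon
        exact hpL (hcon.trans (Nat.div_dvd_of_dvd (heltdvdL i)))
      push_cast [ZMod.natCast_zmod_val] at h0
      have hz2 : z = (-(a i : ZMod p)) * ((b i : ZMod p))⁻¹ := by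
        rw [neg_mul, eq_comm, neg_eq_iff_add_eq_zero]
        field_simp
        linear_combination h0
      exact (Finset.mem_compl.1 hz) (Finset.mem_image.2 ⟨i, Finset.mem_univ i, hz2.symm⟩)
  obtain ⟨t, ht1, htp⟩ := hDickson k' a b hb1 hcond 1
  have hLt1 : 1 ≤ L * t := Nat.mul_pos hLpos (by omega)
  refine ⟨c + L * t, by omega, ?_⟩
  intro m h1 h2
  by_cases hmA : m ∈ A
  · have hmA' : m ∈ A' := by
      simp only [hA'def, Finset.mem_filter, Finset.mem_Icc]
      exact ⟨⟨h1, h2⟩, hmA⟩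
    set i := A'.equivFin ⟨m, hmA'⟩ with hidef
    have heq : elt i = m := by simp only [heltdef, hidef, Equiv.symm_apply_apply]
    have hmdvdc : m ∣ c := by have := heltdvdc i; rwa [heq] at this
    have hmdvdL : m ∣ L := by have := heltdvdL i; rwa [heq] at this
    have hmdvdcm : m ∣ c + m := dvd_add hmdvdc dvd_rfl
    have hval : a i + b i * (t : ℤ) = (((c + m) / m + (L / m) * t : ℕ) : ℤ) := by
      simp only [hadef, hbdef, heq]
      push_cast
      ring
    have hPp : Nat.Prime ((c + m) / m + (L / m) * t) := by
      have hthis := htp i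
      rw [hval] at hthis
      exact Nat.prime_iff_prime_int.2 hthis
    have hnm : c + L * t + m = m * ((c + m) / m + (L / m) * t) := by
      have e1 : m * ((c + m) / m) = c + m := Nat.mul_div_cancel' hmdvdcm
      have e2 : m * (L / m) = L := Nat.mul_div_cancel' hmdvdL
      calc c + L * t + m = m * ((c + m) / m) + (m * (L / m)) * t := by rw [e1, e2]; ring
        _ = m * ((c + m) / m + (L / m) * t) := by ring
    rw [hnm, Omega_mul (by omega) hPp.pos.ne', (hA hmA).2.2, Omega_prime hPp]
    simpa using hmA
  · have hmB : m ∈ B := by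
      simp only [hBdef, Finset.mem_filter, Finset.mem_Icc]
      exact ⟨⟨h1, h2⟩, hmA⟩
    have hd : (q m) ^ K ∣ c + L * t + m := by
      have hre : c + L * t + m = (c + m) + L * t := by ring
      rw [hre]
      exact dvd_add (hcm m hmB) ((hqKdvdL m hmB).mul_right t)
    have hge : K ≤ Omega (c + L * t + m) := by
      have hle := le_Omega_of_dvd hd (by omega)
      rwa [Omega_pow (hqprime m)] at hle
    constructor
    · intro h; omega
    · intro h; exact absurd h hmA
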